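/- Let E ⊂ ℝⁿ be a cone centered at 0 and x ∈ E with |x| = 1. Suppose z_k ∈ E and r_k → 0 are such that (z_k − x)/r_k → z where z is orthogonal to x. Then (|z_k| − 1)/r_k → 0, and consequently (z_k/|z_k| − x)/r_k → z; in particular z belongs to every blow-up limit of E ∩ Sⁿ⁻¹ at x obtained along the sequence r_k. Hence any blow-up limit of E at x (a point of the unit sphere) restricted to the tangent space x^⊥ equals the corresponding blow-up limit of K = E ∩ Sⁿ⁻¹ at x. -/

import Mathlib

open Metric Filter
open scoped RealInnerProductSpace Topology

noncomputable section

set_option maxHeartbeats 1000000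

lemma approx_mem {X : Type*} [NormedAddCommGroup X] {Z : Set X} (hZ : IsClosed Z)
    {p : X} (h : ∀ ε > (0:ℝ), ∃ w ∈ Z, ‖p - w‖ ≤ ε) : p ∈ Z := by
  rw [← hZ.closure_eq, Metric.mem_closure_iff]
  intro ε hε
  obtain ⟨w, hw, hd⟩ := h (ε/2) (by linarith)
  exact ⟨w, hw, by rw [dist_eq_norm]; linarith⟩

lemma tri_norm {X : Type*} [NormedAddCommGroup X] (a b c : X) {d e : ℝ}
    (h1 : ‖b - a‖ ≤ d) (h2 : ‖b - c‖ ≤ e) : ‖a - c‖ ≤ d + e := by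
  have h3 := dist_triangle a b c
  rw [dist_eq_norm, dist_eq_norm, dist_eq_norm] at h3
  have h1' : ‖a - b‖ ≤ d := by rw [norm_sub_rev]; exact h1
  linarith

lemma norm_le_add' {X : Type*} [NormedAddCommGroup X] (v p : X) {e : ℝ}
    (h : ‖v - p‖ ≤ e) : ‖v‖ ≤ ‖p‖ + e := by
  calc ‖v‖ = ‖v - p + p‖ := by rw [sub_add_cancel]
    _ ≤ ‖v - p‖ + ‖p‖ := norm_add_le _ _
    _ ≤ ‖p‖ + e := by linarith

lemma norm_le_of_scaled {X : Type*} [NormedAddCommGroup X] [NormedSpace ℝ X]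
    {r : ℝ} (hr : 0 < r) {u : X} {C : ℝ} (h : ‖r⁻¹ • u‖ ≤ C) : ‖u‖ ≤ C * r := by
  rw [norm_smul, Real.norm_eq_abs, abs_of_pos (inv_pos.mpr hr)] at h
  have h2 : ‖u‖ / r ≤ C := by rw [div_eq_inv_mul]; exact h
  exact (div_le_iff₀ hr).mp h2

lemma keyhalf (c ε ε₁ : ℝ) (hc : 0 ≤ c) (hε : 0 < ε)
    (h1 : ε₁ ≤ ε/(2*(9+c))) : (8+c)*ε₁ ≤ ε/2 := by
  have h9 : (0:ℝ) < 9 + c := by linarith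
  calc (8+c)*ε₁ ≤ (8+c)*(ε/(2*(9+c))) := mul_le_mul_of_nonneg_left h1 (by linarith)
    _ ≤ (9+c)*(ε/(2*(9+c))) := mul_le_mul_of_nonneg_right (by linarith) (by positivity)
    _ = ε/2 := by field_simp

lemma keyone (c ε₁ : ℝ) (hc : 0 ≤ c) (h1 : ε₁ ≤ 1/(9+c)) : (8+c)*ε₁ ≤ 1 := by
  have h9 : (0:ℝ) < 9 + c := by linarith
  calc (8+c)*ε₁ ≤ (8+c)*(1/(9+c)) := mul_le_mul_of_nonneg_left h1 (by linarith)
    _ ≤ 1 := by rw [mul_one_div, div_le_one h9]; linarith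

lemma keybound {X : Type*} [NormedAddCommGroup X] [InnerProductSpace ℝ X]
    (x y p : X) (hx : ‖x‖ = 1) (hp : ⟪x, p⟫ = 0)
    {ε r : ℝ} (hε : 0 < ε) (hε1 : ε ≤ 1) (hr : 0 < r)
    (hr1 : r ≤ ε / (‖p‖ + 1)^2) (hr2 : r ≤ 1/6)
    (hv : ‖r⁻¹ • (y - x) - p‖ ≤ ε) :
    |‖y‖ - 1| ≤ 3*r*ε ∧ (1:ℝ)/2 ≤ ‖y‖ ∧
      ‖r⁻¹ • (‖y‖⁻¹ • y - x) - p‖ ≤ (8 + ‖p‖)*ε := by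
  have hrne : r ≠ 0 := hr.ne'
  set v := r⁻¹ • (y - x) with hvdef
  have hyv : y = x + r • v := by
    rw [hvdef, smul_smul, mul_inv_cancel₀ hrne, one_smul]; abel
  have hsq : ‖y‖^2 = 1 + (2*(r*⟪x,v⟫) + r^2*‖v‖^2) := by
    rw [hyv, norm_add_sq_real, real_inner_smul_right, norm_smul,
      Real.norm_eq_abs, abs_of_pos hr, hx]
    ring
  have hxv : |⟪x,v⟫| ≤ ε := by
    have h1 : ⟪x, v⟫ = ⟪x, v - p⟫ := by rw [inner_sub_right, hp]; ring
    rw [h1]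
    calc |⟪x, v - p⟫| ≤ ‖x‖ * ‖v - p‖ := abs_real_inner_le_norm _ _
      _ = ‖v - p‖ := by rw [hx, one_mul]
      _ ≤ ε := hv
  have hvn : ‖v‖ ≤ ‖p‖ + 1 := by
    calc ‖v‖ = ‖v - p + p‖ := by rw [sub_add_cancel]
      _ ≤ ‖v - p‖ + ‖p‖ := norm_add_le _ _
      _ ≤ ‖p‖ + 1 := by linarith
  have hre : r * (‖p‖+1)^2 ≤ ε := by
    rw [le_div_iff₀ (by positivity)] at hr1; exact hr1
  have hxv' := abs_le.mp hxv
  have hsq1 : |‖y‖^2 - 1| ≤ 3*r*ε := by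
    have e : ‖y‖^2 - 1 = 2*(r*⟪x,v⟫) + r^2*‖v‖^2 := by rw [hsq]; ring
    rw [e, abs_le]
    have hv2 : ‖v‖^2 ≤ (‖p‖+1)^2 := by nlinarith [norm_nonneg v]
    have h2 : r^2 * ‖v‖^2 ≤ r * ε := by
      calc r^2 * ‖v‖^2 ≤ r^2 * (‖p‖+1)^2 :=
            mul_le_mul_of_nonneg_left hv2 (sq_nonneg r)
        _ = r * (r * (‖p‖+1)^2) := by ring
        _ ≤ r * ε := mul_le_mul_of_nonneg_left hre hr.le
    constructor <;> nlinarith [sq_nonneg ‖v‖, sq_nonneg r, hr.le]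
  have hy1 : |‖y‖ - 1| ≤ 3*r*ε := by
    have e1 : |‖y‖^2 - 1| = |‖y‖-1| * (‖y‖+1) := by
      rw [← abs_of_nonneg (show (0:ℝ) ≤ ‖y‖+1 by positivity), ← abs_mul]
      ring_nf
    calc |‖y‖-1| ≤ |‖y‖-1| * (‖y‖+1) :=
          le_mul_of_one_le_right (abs_nonneg _) (by linarith [norm_nonneg y])
      _ = |‖y‖^2 - 1| := e1.symm
      _ ≤ 3*r*ε := hsq1
  have h3re : 3*r*ε ≤ 1/2 := by nlinarith
  have hyhalf : (1:ℝ)/2 ≤ ‖y‖ := by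
    have := abs_le.mp hy1; linarith
  have hyne : ‖y‖ ≠ 0 := by positivity
  refine ⟨hy1, hyhalf, ?_⟩
  have hid : r⁻¹ • (‖y‖⁻¹ • y - x) - p
      = ‖y‖⁻¹ • (v - p) + (‖y‖⁻¹ - 1) • p + ((1-‖y‖)/(r*‖y‖)) • x := by
    rw [hvdef]
    match_scalars <;> field_simp <;> ring
  have hinv2 : ‖y‖⁻¹ ≤ 2 := by
    have := inv_anti₀ (show (0:ℝ) < 1/2 by norm_num) hyhalf
    norm_num at this; exact this
  have t1 : ‖‖y‖⁻¹ • (v - p)‖ ≤ 2*ε := by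
    rw [norm_smul, Real.norm_eq_abs, abs_of_nonneg (by positivity)]
    exact mul_le_mul hinv2 hv (norm_nonneg _) (by norm_num)
  have t2 : ‖(‖y‖⁻¹ - 1) • p‖ ≤ ε * ‖p‖ := by
    rw [norm_smul, Real.norm_eq_abs]
    have habs : |‖y‖⁻¹ - 1| ≤ ε := by
      have e1 : ‖y‖⁻¹ - 1 = (1 - ‖y‖) * ‖y‖⁻¹ := by field_simp
      rw [e1, abs_mul, abs_of_nonneg (show (0:ℝ) ≤ ‖y‖⁻¹ by positivity)]
      have h1 : |1 - ‖y‖| ≤ 3*r*ε := by rw [abs_sub_comm]; exact hy1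
      calc |1-‖y‖| * ‖y‖⁻¹ ≤ (3*r*ε) * 2 :=
            mul_le_mul h1 hinv2 (by positivity) (by positivity)
        _ ≤ ε := by nlinarith
    exact mul_le_mul_of_nonneg_right habs (norm_nonneg p)
  have t3 : ‖((1-‖y‖)/(r*‖y‖)) • x‖ ≤ 6*ε := by
    rw [norm_smul, hx, mul_one, Real.norm_eq_abs, abs_div,
      abs_of_pos (show (0:ℝ) < r*‖y‖ by positivity),
      div_le_iff₀ (by positivity)]
    rw [abs_sub_comm]
    nlinarith [hy1, mul_le_mul_of_nonneg_left hyhalf (show (0:ℝ) ≤ 6*ε*r by positivity)]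
  calc ‖r⁻¹ • (‖y‖⁻¹ • y - x) - p‖
      = ‖‖y‖⁻¹ • (v - p) + (‖y‖⁻¹ - 1) • p + ((1-‖y‖)/(r*‖y‖)) • x‖ := by rw [hid]
    _ ≤ ‖‖y‖⁻¹ • (v - p)‖ + ‖(‖y‖⁻¹ - 1) • p‖ + ‖((1-‖y‖)/(r*‖y‖)) • x‖ :=
        norm_add₃_le
    _ ≤ 2*ε + ε*‖p‖ + 6*ε := by linarith
    _ = (8 + ‖p‖)*ε := by ring

/-- `Z` is the local Hausdorff limit of the sets (F − x)/r_k, along the sequence of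
radii `r`. -/
def BlowUpAlong {X : Type*} [NormedAddCommGroup X] [NormedSpace ℝ X]
    (r : ℕ → ℝ) (F : Set X) (x : X) (Z : Set X) : Prop :=
  ∀ R > (0:ℝ), ∀ ε > (0:ℝ), ∀ᶠ k in Filter.atTop,
    (∀ y ∈ F, ‖y - x‖ ≤ R * r k → ∃ z ∈ Z, ‖(r k)⁻¹ • (y - x) - z‖ ≤ ε) ∧
    (∀ z ∈ Z, ‖z‖ ≤ R → ∃ y ∈ F, ‖(r k)⁻¹ • (y - x) - z‖ ≤ ε)

/-- let E ⊆ ℝⁿ be a cone centered at 0 and x ∈ E with ‖x‖ = 1. If z_k ∈ E,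
r_k → 0 (r_k > 0) and (z_k − x)/r_k → z with z ⊥ x, then (‖z_k‖ − 1)/r_k → 0, and hence
(z_k/‖z_k‖ − x)/r_k → z; in particular z belongs to every (closed) blow-up limit of
K = E ∩ Sⁿ⁻¹ at x along the sequence r_k, and any blow-up limit of E at x along r_k,
intersected with the tangent space x^⊥, equals the corresponding blow-up limit of K. -/
theorem stmt17 (n : ℕ) (E : Set (EuclideanSpace ℝ (Fin n)))
    (hcone : ∀ y ∈ E, ∀ t : ℝ, 0 ≤ t → t • y ∈ E)
    (x : EuclideanSpace ℝ (Fin n)) (hxE : x ∈ E) (hx : ‖x‖ = 1)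
    (z : EuclideanSpace ℝ (Fin n)) (hz : ⟪z, x⟫ = 0)
    (zk : ℕ → EuclideanSpace ℝ (Fin n)) (hzk : ∀ k, zk k ∈ E)
    (r : ℕ → ℝ) (hr : ∀ k, 0 < r k) (hr0 : Tendsto r atTop (nhds 0))
    (hconv : Tendsto (fun k => (r k)⁻¹ • (zk k - x)) atTop (nhds z)) :
    Tendsto (fun k => (‖zk k‖ - 1) / r k) atTop (nhds 0) ∧
    Tendsto (fun k => (r k)⁻¹ • ((‖zk k‖)⁻¹ • zk k - x)) atTop (nhds z) ∧
    (∀ Z : Set (EuclideanSpace ℝ (Fin n)), IsClosed Z →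
      BlowUpAlong r (E ∩ sphere 0 1) x Z → z ∈ Z) ∧
    (∀ Z Z' : Set (EuclideanSpace ℝ (Fin n)), IsClosed Z → IsClosed Z' →
      BlowUpAlong r E x Z → BlowUpAlong r (E ∩ sphere 0 1) x Z' →
      Z' = Z ∩ {p | ⟪x, p⟫ = 0}) := by
  have hzx : ⟪x, z⟫ = 0 := by rw [real_inner_comm]; exact hz
  have hev : ∀ ε > (0:ℝ), ∀ᶠ k in atTop, ‖(r k)⁻¹ • (zk k - x) - z‖ ≤ ε := by
    intro ε hε
    obtain ⟨N, hN⟩ := Metric.tendsto_atTop.mp hconv ε hε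
    refine eventually_atTop.mpr ⟨N, fun k hk => ?_⟩
    have h := hN k hk; rw [dist_eq_norm] at h; exact h.le
  have hrev : ∀ δ > (0:ℝ), ∀ᶠ k in atTop, r k ≤ δ := by
    intro δ hδ
    obtain ⟨N, hN⟩ := Metric.tendsto_atTop.mp hr0 δ hδ
    refine eventually_atTop.mpr ⟨N, fun k hk => ?_⟩
    have h := hN k hk
    rw [Real.dist_eq, sub_zero, abs_of_pos (hr k)] at h
    exact h.le
  have hkey : ∀ ε : ℝ, 0 < ε → ε ≤ 1 → ∀ᶠ k in atTop,
      |‖zk k‖ - 1| ≤ 3 * r k * ε ∧ (1:ℝ)/2 ≤ ‖zk k‖ ∧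
      ‖(r k)⁻¹ • ((‖zk k‖)⁻¹ • zk k - x) - z‖ ≤ (8 + ‖z‖) * ε := by
    intro ε hε hε1
    have hδ : (0:ℝ) < min (ε/(‖z‖+1)^2) (1/6) := lt_min (by positivity) (by norm_num)
    filter_upwards [hev ε hε, hrev _ hδ] with k h1 h2
    exact keybound x (zk k) z hx hzx hε hε1 (hr k)
      (h2.trans (min_le_left _ _)) (h2.trans (min_le_right _ _)) h1
  have partA : Tendsto (fun k => (‖zk k‖ - 1) / r k) atTop (nhds 0) := by
    rw [Metric.tendsto_nhds]
    intro ε hε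
    have hε₁ : (0:ℝ) < min (ε/6) 1 := lt_min (by positivity) one_pos
    filter_upwards [hkey _ hε₁ (min_le_right _ _)] with k hk
    obtain ⟨h1, -, -⟩ := hk
    rw [Real.dist_eq, sub_zero, abs_div, abs_of_pos (hr k), div_lt_iff₀ (hr k)]
    have h2 : 3 * r k * min (ε/6) 1 ≤ 3 * r k * (ε/6) :=
      mul_le_mul_of_nonneg_left (min_le_left _ _) (by linarith [hr k])
    nlinarith [mul_pos (hr k) hε]
  have partB : Tendsto (fun k => (r k)⁻¹ • ((‖zk k‖)⁻¹ • zk k - x)) atTop (nhds z) := by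
    rw [Metric.tendsto_nhds]
    intro ε hε
    have h9 : (0:ℝ) < 9 + ‖z‖ := by positivity
    set ε₁ := min (ε/(2*(9+‖z‖))) (1/(9+‖z‖)) with hε₁def
    have hε₁ : 0 < ε₁ := lt_min (by positivity) (by positivity)
    have hε₁1 : ε₁ ≤ 1 := (min_le_right _ _).trans
      (by rw [div_le_one h9]; linarith [norm_nonneg z])
    have key1 : (8+‖z‖) * ε₁ ≤ ε/2 :=
      keyhalf _ _ _ (norm_nonneg z) hε (min_le_left _ _)
    filter_upwards [hkey _ hε₁ hε₁1] with k hk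
    obtain ⟨-, -, h3⟩ := hk
    rw [dist_eq_norm]
    calc ‖(r k)⁻¹ • ((‖zk k‖)⁻¹ • zk k - x) - z‖ ≤ (8+‖z‖)*ε₁ := h3
      _ ≤ ε/2 := key1
      _ < ε := by linarith
  refine ⟨partA, partB, ?_, ?_⟩
  · -- z belongs to every blow-up of K
    intro Z hZc hZ
    apply approx_mem hZc
    intro ε hε
    have h9 : (0:ℝ) < 9 + ‖z‖ := by positivity
    set ε₁ := min (ε/(2*(9+‖z‖))) (1/(9+‖z‖)) with hε₁def
    have hε₁ : 0 < ε₁ := lt_min (by positivity) (by positivity)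
    have hε₁1 : ε₁ ≤ 1 := (min_le_right _ _).trans
      (by rw [div_le_one h9]; linarith [norm_nonneg z])
    have key1 : (8+‖z‖) * ε₁ ≤ ε/2 :=
      keyhalf _ _ _ (norm_nonneg z) hε (min_le_left _ _)
    have key2 : (8+‖z‖) * ε₁ ≤ 1 := keyone _ _ (norm_nonneg z) (min_le_right _ _)
    have hblow := hZ (‖z‖+1) (by positivity) (ε/2) (by positivity)
    obtain ⟨k, ⟨-, hyhalf, h3⟩, hb1, -⟩ := ((hkey _ hε₁ hε₁1).and hblow).exists
    set y := (‖zk k‖)⁻¹ • zk k with hydef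
    have hzkpos : (0:ℝ) < ‖zk k‖ := by linarith
    have hyE : y ∈ E := hcone (zk k) (hzk k) _ (by positivity)
    have hysph : y ∈ sphere (0 : EuclideanSpace ℝ (Fin n)) 1 := by
      rw [mem_sphere_zero_iff_norm, hydef, norm_smul, Real.norm_eq_abs,
        abs_of_pos (inv_pos.mpr hzkpos), inv_mul_cancel₀ hzkpos.ne']
    have hnear : ‖(r k)⁻¹ • (y - x)‖ ≤ ‖z‖ + 1 := by
      have := norm_le_add' _ z h3
      linarith
    have hdist : ‖y - x‖ ≤ (‖z‖+1) * r k := norm_le_of_scaled (hr k) hnear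
    obtain ⟨w, hwZ, hw⟩ := hb1 y ⟨hyE, hysph⟩ hdist
    refine ⟨w, hwZ, ?_⟩
    have := tri_norm z ((r k)⁻¹ • (y - x)) w h3 hw
    linarith
  · -- the equality of blow-ups
    intro Z Z' hZc hZ'c hZ hZ'
    ext p
    simp only [Set.mem_inter_iff, Set.mem_setOf_eq]
    constructor
    · intro hpZ'
      constructor
      · -- p ∈ Z
        apply approx_mem hZc
        intro ε hε
        have hε₁ : (0:ℝ) < min (ε/2) 1 := lt_min (by positivity) one_pos
        have h2 := hZ' (‖p‖+1) (by positivity) _ hε₁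
        have h1 := hZ (‖p‖+2) (by positivity) (ε/2) (by positivity)
        obtain ⟨k, hk2, hk1⟩ := (h2.and h1).exists
        obtain ⟨y, ⟨hyE, hysph⟩, hyp⟩ := hk2.2 p hpZ' (by linarith [norm_nonneg p])
        have hnear : ‖(r k)⁻¹ • (y - x)‖ ≤ ‖p‖ + 2 := by
          have := norm_le_add' _ p hyp
          have h3 : min (ε/2) 1 ≤ 1 := min_le_right _ _
          linarith
        have hdist : ‖y - x‖ ≤ (‖p‖+2) * r k := norm_le_of_scaled (hr k) hnear
        obtain ⟨w, hwZ, hw⟩ := hk1.1 y hyE hdist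
        refine ⟨w, hwZ, ?_⟩
        have := tri_norm p ((r k)⁻¹ • (y - x)) w hyp hw
        have h3 : min (ε/2) 1 ≤ ε/2 := min_le_left _ _
        linarith
      · -- ⟪x, p⟫ = 0
        have hb : ∀ ε > (0:ℝ), |⟪x,p⟫| ≤ ε := by
          intro ε hε
          have hε₁ : (0:ℝ) < min (ε/2) 1 := lt_min (by positivity) one_pos
          have h2 := hZ' (‖p‖+1) (by positivity) _ hε₁
          have hδ : (0:ℝ) < ε / (‖p‖+1)^2 := by positivity
          obtain ⟨k, hk2, hkr⟩ := (h2.and (hrev _ hδ)).exists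
          obtain ⟨y, ⟨hyE, hysph⟩, hyp⟩ := hk2.2 p hpZ' (by linarith [norm_nonneg p])
          set v := (r k)⁻¹ • (y - x) with hvdef
          have hy1 : ‖y‖ = 1 := mem_sphere_zero_iff_norm.mp hysph
          have hvn : ‖v‖ ≤ ‖p‖ + 1 := by
            have := norm_le_add' v p hyp
            have h3 : min (ε/2) 1 ≤ 1 := min_le_right _ _
            linarith
          have hyx : ‖y - x‖ ≤ (‖p‖+1) * r k := norm_le_of_scaled (hr k) hvn
          have hxv : ⟪x, v⟫ = (r k)⁻¹ * (⟪y,x⟫ - 1) := by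
            rw [hvdef, real_inner_smul_right, inner_sub_right,
              real_inner_self_eq_norm_sq, hx, real_inner_comm]
            norm_num
          have hsub : ‖y - x‖^2 = 2 - 2*⟪y,x⟫ := by
            rw [norm_sub_sq_real, hy1, hx]; ring
          have hbnd : |⟪y,x⟫ - 1| ≤ (‖p‖+1)^2 * r k^2 / 2 := by
            have e : ⟪y,x⟫ - 1 = -(‖y - x‖^2/2) := by linarith
            rw [e, abs_neg, abs_of_nonneg (by positivity)]
            nlinarith [norm_nonneg (y - x), (hr k).le]
          have hxv2 : |⟪x,v⟫| ≤ r k * (‖p‖+1)^2 / 2 := by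
            rw [hxv, abs_mul, abs_of_pos (inv_pos.mpr (hr k))]
            calc (r k)⁻¹ * |⟪y,x⟫ - 1| ≤ (r k)⁻¹ * ((‖p‖+1)^2 * r k^2 / 2) :=
                  mul_le_mul_of_nonneg_left hbnd (inv_pos.mpr (hr k)).le
              _ = r k * (‖p‖+1)^2 / 2 := by
                  field_simp [(hr k).ne']
          have hxr : r k * (‖p‖+1)^2 ≤ ε := by
            rw [le_div_iff₀ (by positivity)] at hkr; exact hkr
          have hdiff : |⟪x, p - v⟫| ≤ min (ε/2) 1 := by
            calc |⟪x, p - v⟫| ≤ ‖x‖ * ‖p - v‖ := abs_real_inner_le_norm _ _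
              _ = ‖v - p‖ := by rw [hx, one_mul, norm_sub_rev]
              _ ≤ min (ε/2) 1 := hyp
          have e : ⟪x,p⟫ = ⟪x, p - v⟫ + ⟪x, v⟫ := by rw [inner_sub_right]; ring
          have h3 : min (ε/2) 1 ≤ ε/2 := min_le_left _ _
          calc |⟪x,p⟫| = |⟪x, p - v⟫ + ⟪x, v⟫| := by rw [e]
            _ ≤ |⟪x, p - v⟫| + |⟪x, v⟫| := abs_add_le _ _
            _ ≤ ε := by linarith
        by_contra hne
        have hpos : 0 < |⟪x,p⟫| := abs_pos.mpr hne
        linarith [hb _ (half_pos hpos)]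
    · rintro ⟨hpZ, hpx⟩
      apply approx_mem hZ'c
      intro ε hε
      have h9 : (0:ℝ) < 9 + ‖p‖ := by positivity
      set ε₁ := min (ε/(2*(9+‖p‖))) (1/(9+‖p‖)) with hε₁def
      have hε₁ : 0 < ε₁ := lt_min (by positivity) (by positivity)
      have hε₁1 : ε₁ ≤ 1 := (min_le_right _ _).trans
        (by rw [div_le_one h9]; linarith [norm_nonneg p])
      have key1 : (8+‖p‖) * ε₁ ≤ ε/2 :=
        keyhalf _ _ _ (norm_nonneg p) hε (min_le_left _ _)
      have key2 : (8+‖p‖) * ε₁ ≤ 1 := keyone _ _ (norm_nonneg p) (min_le_right _ _)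
      have hδ : (0:ℝ) < min (ε₁/(‖p‖+1)^2) (1/6) := lt_min (by positivity) (by norm_num)
      have h2 := hZ (‖p‖+1) (by positivity) ε₁ hε₁
      have h1 := hZ' (‖p‖+1) (by positivity) (ε/2) (by positivity)
      obtain ⟨k, hk2, hk1, hkr⟩ := (h2.and (h1.and (hrev _ hδ))).exists
      obtain ⟨y, hyE, hyp⟩ := hk2.2 p hpZ (by linarith [norm_nonneg p])
      obtain ⟨hy1, hyhalf, hbound⟩ := keybound x y p hx hpx hε₁ hε₁1 (hr k)
        (hkr.trans (min_le_left _ _)) (hkr.trans (min_le_right _ _)) hyp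
      set y' := (‖y‖)⁻¹ • y with hy'def
      have hypos : (0:ℝ) < ‖y‖ := by linarith
      have hy'E : y' ∈ E := hcone y hyE _ (by positivity)
      have hy'sph : y' ∈ sphere (0 : EuclideanSpace ℝ (Fin n)) 1 := by
        rw [mem_sphere_zero_iff_norm, hy'def, norm_smul, Real.norm_eq_abs,
          abs_of_pos (inv_pos.mpr hypos), inv_mul_cancel₀ hypos.ne']
      have hnear : ‖(r k)⁻¹ • (y' - x)‖ ≤ ‖p‖ + 1 := by
        have := norm_le_add' _ p hbound
        linarith
      have hdist : ‖y' - x‖ ≤ (‖p‖+1) * r k := norm_le_of_scaled (hr k) hnear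
      obtain ⟨w, hwZ', hw⟩ := hk1.1 y' ⟨hy'E, hy'sph⟩ hdist
      refine ⟨w, hwZ', ?_⟩
      have := tri_norm p ((r k)⁻¹ • (y' - x)) w hbound hw
      linarith

end
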